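/- Consider the 3-dimensional lattice Kuramoto model with coupling range r = √2 (adjacency exactly when the toroidal squared distance is 1 or 2) and the (q1,q2,q3)-twisted state. If 4·max{|q1|+|q2|, |q2|+|q3|, |q1|+|q3|} < L, then the Jacobian matrix J at the twisted state is negative semidefinite and its kernel is one-dimensional, spanned by the all-ones vector (the twisted state is asymptotically stable). -/

import Mathlib

noncomputable section
open Real Finset Matrix

/-- Toroidal squared distance on the `m`-dimensional lattice `(ZMod L)ᵐ`:
`d(x,y) = Σ_j min(|x_j−y_j|, L−|x_j−y_j|)²` with representatives in `{0,…,L−1}`. -/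
def torDistM (L m : ℕ) (x y : Fin m → ZMod L) : ℕ :=
  ∑ j, (min (((x j).val : ℤ) - ((y j).val : ℤ)).natAbs
      (L - (((x j).val : ℤ) - ((y j).val : ℤ)).natAbs)) ^ 2

/-- Adjacency with real coupling range `r`: `A(x,y) = 1` iff `0 < d(x,y) ≤ r²`, else `0`. -/
def adjRM (L m : ℕ) (r : ℝ) (x y : Fin m → ZMod L) : ℝ :=
  if 0 < torDistM L m x y ∧ (torDistM L m x y : ℝ) ≤ r ^ 2 then 1 else 0

/-- Adjacency with integer squared coupling range `r2`:
`A(x,y) = 1` iff `0 < d(x,y) ≤ r2`, else `0`. -/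
def adjNM (L m r2 : ℕ) (x y : Fin m → ZMod L) : ℝ :=
  if 0 < torDistM L m x y ∧ torDistM L m x y ≤ r2 then 1 else 0

/-- The `(q1,…,qm)`-twisted state `θ_x = Σ_j 2π q_j x_j / L + C`. -/
def twistedM (L m : ℕ) (q : Fin m → ℤ) (C : ℝ) (x : Fin m → ZMod L) : ℝ :=
  (∑ j, 2 * π * q j * (x j).val / L) + C

/-- Jacobian of the `m`-dimensional lattice Kuramoto model (real range `r`) at configuration `u`. -/
def jacRM (L m : ℕ) [NeZero L] (r : ℝ) (u : (Fin m → ZMod L) → ℝ) :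
    Matrix (Fin m → ZMod L) (Fin m → ZMod L) ℝ :=
  fun x y =>
    if x = y then -∑ z, adjRM L m r x z * Real.cos (u z - u x)
    else adjRM L m r x y * Real.cos (u y - u x)

/-- Jacobian of the `m`-dimensional lattice Kuramoto model (integer squared range `r2`) at
configuration `u`. -/
def jacNM (L m : ℕ) [NeZero L] (r2 : ℕ) (u : (Fin m → ZMod L) → ℝ) :
    Matrix (Fin m → ZMod L) (Fin m → ZMod L) ℝ :=
  fun x y =>
    if x = y then -∑ z, adjNM L m r2 x z * Real.cos (u z - u x)
    else adjNM L m r2 x y * Real.cos (u y - u x)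

namespace KAux

lemma decomp (L : ℕ) [NeZero L] (a b : ZMod L) :
    ∃ ε t : ℤ, ((a.val : ℤ) - b.val) = ε + L * t ∧
      ε.natAbs = min ((a.val : ℤ) - (b.val : ℤ)).natAbs (L - ((a.val : ℤ) - (b.val : ℤ)).natAbs) := by
  have hL : 0 < L := Nat.pos_of_ne_zero (NeZero.ne L)
  have ha : a.val < L := ZMod.val_lt a
  have hb : b.val < L := ZMod.val_lt b
  set d : ℤ := (a.val : ℤ) - b.val with hd
  by_cases hc : 2 * d.natAbs ≤ L
  · exact ⟨d, 0, by ring, by omega⟩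
  · rcases le_or_gt 0 d with h0 | h0
    · exact ⟨d - L, 1, by ring, by omega⟩
    · exact ⟨d + L, -1, by ring, by omega⟩

lemma tor_symm (L m : ℕ) (x y : Fin m → ZMod L) : torDistM L m x y = torDistM L m y x := by
  unfold torDistM
  refine Finset.sum_congr rfl fun j _ => ?_
  have : ((x j).val - ((y j).val : ℤ)).natAbs = (((y j).val : ℤ) - (x j).val).natAbs := by omega
  rw [this]

lemma tor_self (L m : ℕ) (x : Fin m → ZMod L) : torDistM L m x x = 0 := by
  unfold torDistM; simp

lemma bound_aux (a b c : ℤ) (e0 e1 e2 : ℕ) (ha : 0 ≤ a) (hb : 0 ≤ b) (hc : 0 ≤ c)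
    (he : e0 ^ 2 + e1 ^ 2 + e2 ^ 2 ≤ 2) :
    a * e0 + b * e1 + c * e2 ≤ max (a + b) (max (b + c) (a + c)) := by
  have k0 : e0 ≤ 1 := by nlinarith
  have k1 : e1 ≤ 1 := by nlinarith
  have k2 : e2 ≤ 1 := by nlinarith
  interval_cases e0 <;> interval_cases e1 <;> interval_cases e2 <;>
    (revert he; norm_num <;> omega)

lemma cos_pos (L : ℕ) [NeZero L] (q1 q2 q3 : ℤ) (C : ℝ)
    (h : 4 * max (|q1| + |q2|) (max (|q2| + |q3|) (|q1| + |q3|)) < (L : ℤ))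
    (x z : Fin 3 → ZMod L) (hd : torDistM L 3 x z ≤ 2) :
    0 < Real.cos (twistedM L 3 ![q1, q2, q3] C z - twistedM L 3 ![q1, q2, q3] C x) := by
  have hL : 0 < L := Nat.pos_of_ne_zero (NeZero.ne L)
  have hLR : (0:ℝ) < L := by exact_mod_cast hL
  set q : Fin 3 → ℤ := ![q1, q2, q3] with hq
  have H : ∀ j : Fin 3, ∃ ε t : ℤ, (((z j).val : ℤ) - ((x j).val : ℤ)) = ε + L * t ∧
      ε.natAbs = min (((z j).val : ℤ) - ((x j).val : ℤ)).natAbs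
        (L - (((z j).val : ℤ) - ((x j).val : ℤ)).natAbs) := fun j => decomp L (z j) (x j)
  choose ε t hεt hm using H
  have hdiff : twistedM L 3 q C z - twistedM L 3 q C x
      = 2 * π * (∑ j, (q j * ε j : ℤ)) / L + (∑ j, (q j * t j : ℤ)) * (2 * π) := by
    unfold twistedM
    have : ∀ j : Fin 3, ((z j).val : ℝ) - ((x j).val : ℝ) = (ε j : ℝ) + L * t j := by
      intro j
      exact_mod_cast congrArg (fun r : ℤ => (r : ℝ)) (hεt j)
    rw [add_sub_add_right_eq_sub, ← Finset.sum_sub_distrib]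
    push_cast
    rw [Finset.sum_mul, Finset.mul_sum, Finset.sum_div, ← Finset.sum_add_distrib]
    refine Finset.sum_congr rfl fun j _ => ?_
    have hj := this j
    simp only [ZMod.natCast_val] at hj
    field_simp
    linear_combination ((q j : ℤ) : ℝ) * this j
  set s : ℤ := ∑ j, q j * ε j with hs_def
  have hnn : ∀ j : Fin 3, (((z j).val : ℤ) - ((x j).val : ℤ)).natAbs
      = (((x j).val : ℤ) - ((z j).val : ℤ)).natAbs := fun j => by omega
  have hd2 : (ε 0).natAbs ^ 2 + (ε 1).natAbs ^ 2 + (ε 2).natAbs ^ 2 ≤ 2 := by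
    unfold torDistM at hd
    simp only [← hnn] at hd
    simp only [← hm] at hd
    rwa [Fin.sum_univ_three] at hd
  have hs_eq : s = q1 * ε 0 + q2 * ε 1 + q3 * ε 2 := by
    rw [hs_def, Fin.sum_univ_three, hq]
    simp
  have habs1 : |s| ≤ |q1| * ((ε 0).natAbs : ℤ) + |q2| * ((ε 1).natAbs : ℤ)
      + |q3| * ((ε 2).natAbs : ℤ) := by
    rw [hs_eq]
    refine (abs_add_three _ _ _).trans ?_
    simp only [abs_mul, Int.abs_eq_natAbs]
    exact le_refl _
  have hsM : |s| ≤ max (|q1| + |q2|) (max (|q2| + |q3|) (|q1| + |q3|)) :=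
    habs1.trans (bound_aux _ _ _ _ _ _ (abs_nonneg _) (abs_nonneg _) (abs_nonneg _) hd2)
  have hsL : 4 * |s| < (L : ℤ) := by omega
  rw [hdiff, Real.cos_add_int_mul_two_pi]
  apply Real.cos_pos_of_mem_Ioo
  have habsR : |(s : ℝ)| * 4 < (L : ℝ) := by
    have h4 : (4 * |s| : ℤ) < (L : ℤ) := hsL
    calc |(s : ℝ)| * 4 = ((4 * |s| : ℤ) : ℝ) := by push_cast; ring
    _ < L := by exact_mod_cast h4
  have hb2 : |2 * π * (s : ℝ) / L| < π / 2 := by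
    rw [abs_div, abs_of_pos hLR, abs_mul, abs_mul, abs_two, abs_of_pos pi_pos,
      div_lt_iff₀ hLR]
    nlinarith [pi_pos, habsR, abs_nonneg (s : ℝ)]
  rcases abs_lt.mp hb2 with ⟨hb3, hb4⟩
  exact ⟨by linarith, by linarith⟩

/-- The edge weight. -/
def cM (L : ℕ) [NeZero L] (q1 q2 q3 : ℤ) (C : ℝ) (p z : Fin 3 → ZMod L) : ℝ :=
  adjNM L 3 2 p z *
    Real.cos (twistedM L 3 ![q1, q2, q3] C z - twistedM L 3 ![q1, q2, q3] C p)

variable (L : ℕ) [NeZero L] (q1 q2 q3 : ℤ) (C : ℝ)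

lemma c_nonneg (h : 4 * max (|q1| + |q2|) (max (|q2| + |q3|) (|q1| + |q3|)) < (L : ℤ))
    (p z : Fin 3 → ZMod L) : 0 ≤ cM L q1 q2 q3 C p z := by
  unfold cM adjNM
  split_ifs with hc
  · rw [one_mul]; exact (cos_pos L q1 q2 q3 C h p z hc.2).le
  · rw [zero_mul]

lemma c_symm (p z : Fin 3 → ZMod L) : cM L q1 q2 q3 C p z = cM L q1 q2 q3 C z p := by
  unfold cM adjNM
  rw [tor_symm L 3 z p, ← Real.cos_neg, neg_sub]

lemma adj_diag (p : Fin 3 → ZMod L) : adjNM L 3 2 p p = 0 := by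
  unfold adjNM
  rw [tor_self]
  simp

lemma c_diag (p : Fin 3 → ZMod L) : cM L q1 q2 q3 C p p = 0 := by
  unfold cM
  rw [adj_diag, zero_mul]

lemma jac_eq (p z : Fin 3 → ZMod L) :
    jacNM L 3 2 (twistedM L 3 ![q1, q2, q3] C) p z
      = cM L q1 q2 q3 C p z - (if p = z then ∑ w, cM L q1 q2 q3 C p w else 0) := by
  by_cases hpz : p = z
  · subst hpz
    simp [jacNM, cM, adj_diag]
  · simp [jacNM, hpz, cM]

lemma quad_eq (x : (Fin 3 → ZMod L) → ℝ) :
    x ⬝ᵥ (jacNM L 3 2 (twistedM L 3 ![q1, q2, q3] C)).mulVec x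
      = -(1/2) * ∑ p, ∑ z, cM L q1 q2 q3 C p z * (x p - x z) ^ 2 := by
  classical
  set c := cM L q1 q2 q3 C with hc
  have h1 : x ⬝ᵥ (jacNM L 3 2 (twistedM L 3 ![q1, q2, q3] C)).mulVec x
      = (∑ p, ∑ z, c p z * x p * x z) - (∑ p, ∑ z, c p z * x p * x p) := by
    simp only [dotProduct, mulVec]
    calc ∑ p, x p * ∑ z, jacNM L 3 2 (twistedM L 3 ![q1, q2, q3] C) p z * x z
        = ∑ p, x p * ((∑ z, c p z * x z) - (∑ z, c p z) * x p) := by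
          refine Finset.sum_congr rfl fun p _ => ?_
          congr 1
          simp only [jac_eq L q1 q2 q3 C p, sub_mul, ite_mul, zero_mul, ← hc]
          rw [Finset.sum_sub_distrib]
          congr 1
          rw [Finset.sum_ite_eq]
          simp
      _ = (∑ p, ∑ z, c p z * x p * x z) - (∑ p, ∑ z, c p z * x p * x p) := by
          rw [← Finset.sum_sub_distrib]
          refine Finset.sum_congr rfl fun p _ => ?_
          rw [mul_sub]
          congr 1
          · rw [Finset.mul_sum]
            exact Finset.sum_congr rfl fun z _ => by ring
          · rw [show x p * ((∑ z, c p z) * x p) = (∑ z, c p z) * (x p * x p) by ring,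
              Finset.sum_mul]
            exact Finset.sum_congr rfl fun z _ => by ring
  have hswap : ∑ p, ∑ z, c p z * x z * x z = ∑ p, ∑ z, c p z * x p * x p := by
    rw [Finset.sum_comm]
    exact Finset.sum_congr rfl fun a _ => Finset.sum_congr rfl fun b _ => by
      rw [hc, c_symm L q1 q2 q3 C b a]
  have h2 : ∑ p, ∑ z, c p z * (x p - x z) ^ 2
      = (∑ p, ∑ z, c p z * x p * x p) - 2 * (∑ p, ∑ z, c p z * x p * x z)
        + (∑ p, ∑ z, c p z * x z * x z) := by
    have hterm : ∀ p z : Fin 3 → ZMod L, c p z * (x p - x z) ^ 2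
        = (c p z * x p * x p - 2 * (c p z * x p * x z)) + c p z * x z * x z := by
      intros; ring
    simp_rw [hterm]
    simp only [Finset.sum_add_distrib, Finset.sum_sub_distrib, ← Finset.mul_sum]
  rw [h1, h2, hswap]
  ring

lemma tor_update (hL : 2 ≤ L) (p : Fin 3 → ZMod L) (j : Fin 3) :
    torDistM L 3 p (Function.update p j (p j + 1)) = 1 := by
  haveI : Fact (1 < L) := ⟨hL⟩
  have hv : (p j + 1).val = ((p j).val + 1) % L := by rw [ZMod.val_add, ZMod.val_one]
  unfold torDistM
  have hterm : ∀ i : Fin 3,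
      (min (((p i).val : ℤ) - (((Function.update p j (p j + 1)) i).val : ℤ)).natAbs
        (L - (((p i).val : ℤ) - (((Function.update p j (p j + 1)) i).val : ℤ)).natAbs)) ^ 2
      = if i = j then 1 else 0 := by
    intro i
    by_cases hij : i = j
    · subst hij
      rw [Function.update_self, if_pos rfl, hv]
      have hvlt : (p i).val < L := ZMod.val_lt _
      rcases Nat.lt_or_ge ((p i).val + 1) L with hlt | hge
      · rw [Nat.mod_eq_of_lt hlt]
        have hmin : min (((p i).val : ℤ) - (((p i).val + 1 : ℕ) : ℤ)).natAbs
            (L - (((p i).val : ℤ) - (((p i).val + 1 : ℕ) : ℤ)).natAbs) = 1 := by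
          push_cast
          omega
        rw [hmin, one_pow]
      · have hEq : (p i).val + 1 = L := by omega
        rw [hEq, Nat.mod_self]
        have hmin : min (((p i).val : ℤ) - ((0 : ℕ) : ℤ)).natAbs
            (L - (((p i).val : ℤ) - ((0 : ℕ) : ℤ)).natAbs) = 1 := by
          push_cast
          omega
        rw [hmin, one_pow]
    · rw [Function.update_of_ne hij, if_neg hij]
      simp
  rw [Finset.sum_congr rfl fun i _ => hterm i]
  simp

lemma rowsum (p : Fin 3 → ZMod L) :
    ∑ z, jacNM L 3 2 (twistedM L 3 ![q1, q2, q3] C) p z = 0 := by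
  classical
  simp only [jac_eq L q1 q2 q3 C p]
  rw [Finset.sum_sub_distrib, Finset.sum_ite_eq]
  simp

end KAux

open KAux

/-- 3D lattice with coupling range `r = √2` (toroidal squared distance `1` or `2`): if
`4 max{|q1|+|q2|, |q2|+|q3|, |q1|+|q3|} < L` then the Jacobian at the `(q1,q2,q3)`-twisted state
is negative semidefinite and its kernel is one-dimensional, spanned by the all-ones vector
(asymptotic stability). -/
theorem three_dim_diagonal_coupling_stable (L : ℕ) [NeZero L] (q1 q2 q3 : ℤ) (C : ℝ)
    (h : 4 * max (|q1| + |q2|) (max (|q2| + |q3|) (|q1| + |q3|)) < (L : ℤ)) :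
    (∀ x : (Fin 3 → ZMod L) → ℝ,
      x ⬝ᵥ (jacNM L 3 2 (twistedM L 3 ![q1, q2, q3] C)).mulVec x ≤ 0) ∧
    (jacNM L 3 2 (twistedM L 3 ![q1, q2, q3] C)).mulVec (Function.const _ 1) = 0 ∧
    (∀ y : (Fin 3 → ZMod L) → ℝ,
      (jacNM L 3 2 (twistedM L 3 ![q1, q2, q3] C)).mulVec y = 0 →
        ∃ c : ℝ, y = Function.const _ c) := by

  classical
  set u := twistedM L 3 ![q1, q2, q3] C with hu
  set J := jacNM L 3 2 u with hJ
  refine ⟨?_, ?_, ?_⟩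
  · intro x
    rw [quad_eq L q1 q2 q3 C x]
    have hS : 0 ≤ ∑ p, ∑ z, cM L q1 q2 q3 C p z * (x p - x z) ^ 2 :=
      Finset.sum_nonneg fun p _ => Finset.sum_nonneg fun z _ =>
        mul_nonneg (c_nonneg L q1 q2 q3 C h p z) (sq_nonneg _)
    nlinarith
  · funext p
    have : J.mulVec (Function.const _ 1) p = ∑ z, J p z := by
      simp [mulVec, dotProduct, Function.const]
    rw [this, hJ, hu]
    exact rowsum L q1 q2 q3 C p
  · intro y hy
    -- the quadratic form vanishes
    have hq0 : ∑ p, ∑ z, cM L q1 q2 q3 C p z * (y p - y z) ^ 2 = 0 := by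
      have hqe := quad_eq L q1 q2 q3 C y
      rw [← hu, ← hJ, hy, dotProduct_zero] at hqe
      linarith
    have hterm : ∀ p z : Fin 3 → ZMod L, cM L q1 q2 q3 C p z * (y p - y z) ^ 2 = 0 := by
      have houter := (Finset.sum_eq_zero_iff_of_nonneg fun p _ =>
        Finset.sum_nonneg fun z _ =>
          mul_nonneg (c_nonneg L q1 q2 q3 C h p z) (sq_nonneg _)).mp hq0
      intro p z
      have hinner := (Finset.sum_eq_zero_iff_of_nonneg fun z _ =>
        mul_nonneg (c_nonneg L q1 q2 q3 C h p z) (sq_nonneg _)).mp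
          (houter p (Finset.mem_univ p))
      exact hinner z (Finset.mem_univ z)
    -- one unit step preserves y
    have step : ∀ (p : Fin 3 → ZMod L) (j : Fin 3),
        y (Function.update p j (p j + 1)) = y p := by
      intro p j
      have hL1 : 1 ≤ L := Nat.one_le_iff_ne_zero.mpr (NeZero.ne L)
      rcases eq_or_lt_of_le hL1 with hL | hL
      · -- L = 1
        subst hL
        congr 1
        exact Subsingleton.elim _ _
      · -- 2 ≤ L
        have hd1 : torDistM L 3 p (Function.update p j (p j + 1)) = 1 :=
          tor_update L hL p j
        have hcpos : 0 < cM L q1 q2 q3 C p (Function.update p j (p j + 1)) := by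
          unfold cM adjNM
          rw [hd1]
          norm_num
          exact cos_pos L q1 q2 q3 C h p _ (by rw [hd1]; norm_num)
        have h0 := hterm p (Function.update p j (p j + 1))
        rcases mul_eq_zero.mp h0 with h1 | h1
        · exact absurd h1 hcpos.ne'
        · have := pow_eq_zero_iff (n := 2) (by norm_num) |>.mp h1
          have := sub_eq_zero.mp this
          linarith [this]
    -- iterate: adding any natural number
    have stepN : ∀ (p : Fin 3 → ZMod L) (j : Fin 3) (n : ℕ),
        y (Function.update p j (p j + (n : ZMod L))) = y p := by
      intro p j n
      induction n with
      | zero => simp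
      | succ n ih =>
        have h1 : Function.update p j (p j + ((n + 1 : ℕ) : ZMod L))
            = Function.update (Function.update p j (p j + (n : ZMod L))) j
                ((Function.update p j (p j + (n : ZMod L))) j + 1) := by
          rw [Function.update_self, Function.update_idem]
          push_cast
          ring_nf
        rw [h1, step, ih]
    -- updating any coordinate to any value
    have updAny : ∀ (p : Fin 3 → ZMod L) (j : Fin 3) (a : ZMod L),
        y (Function.update p j a) = y p := by
      intro p j a
      have h2 : p j + (((a - p j).val : ℕ) : ZMod L) = a := by
        rw [ZMod.natCast_zmod_val]
        ring
      have := stepN p j (a - p j).val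
      rwa [h2] at this
    have hconst : ∀ p : Fin 3 → ZMod L, y p = y (fun _ => (0 : ZMod L)) := by
      intro p
      have e1 : (fun _ => (0 : ZMod L))
          = Function.update (Function.update (Function.update p 0 0) 1 0) 2 0 := by
        funext i
        fin_cases i <;> simp [Function.update]
      rw [e1, updAny, updAny, updAny]
    refine ⟨y (fun _ => (0 : ZMod L)), funext fun p => ?_⟩
    simpa [Function.const] using hconst p
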